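/- Suppose the normalized Laplacian 𝓛 admits an orthogonal eigendecomposition 𝓛 = U Λ Uᵀ with U an orthogonal n×n real matrix and Λ diagonal. Then for every vector x in ℝ^n, the bilateral filter output x_out = D⁻¹ W x satisfies D^{1/2} x_out = U (I − Λ) Uᵀ D^{1/2} x; i.e. the bilateral filter is a graph spectral filter with spectral response h(λ) = 1 − λ. -/

import Mathlib

open Matrix

/-- The bilateral filter is a graph spectral filter with spectral response
`h(λ) = 1 − λ`:  `D^{1/2} x_out = U (I − Λ) Uᵀ D^{1/2} x`. -/
theorem bilateral_filter_spectral_response (n : ℕ) (hn : 0 < n)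
    (W : Matrix (Fin n) (Fin n) ℝ) (hWsymm : W.IsSymm)
    (hWnn : ∀ i j, 0 ≤ W i j)
    (d : Fin n → ℝ) (hd : ∀ j, d j = ∑ i, W i j) (hdpos : ∀ j, 0 < d j)
    (D Dhalf Dinvhalf L : Matrix (Fin n) (Fin n) ℝ)
    (hD : D = Matrix.diagonal d)
    (hDhalf : Dhalf = Matrix.diagonal fun j => Real.sqrt (d j))
    (hDinvhalf : Dinvhalf = Matrix.diagonal fun j => (Real.sqrt (d j))⁻¹)
    (hL : L = Dinvhalf * (D - W) * Dinvhalf)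
    (U Λ : Matrix (Fin n) (Fin n) ℝ)
    (hUorth : U * Uᵀ = 1) (hUorth' : Uᵀ * U = 1)
    (hΛ : Λ.IsDiag) (hdec : L = U * Λ * Uᵀ)
    (x xout : Fin n → ℝ)
    (hxout : xout = (D⁻¹ * W) *ᵥ x) :
    Dhalf *ᵥ xout = (U * (1 - Λ) * Uᵀ) *ᵥ (Dhalf *ᵥ x) := by
  have hdne : ∀ j, d j ≠ 0 := fun j => (hdpos j).ne'
  have hsne : ∀ j, Real.sqrt (d j) ≠ 0 := fun j =>
    (Real.sqrt_pos.mpr (hdpos j)).ne'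
  have hDinv : D⁻¹ = Matrix.diagonal fun j => (d j)⁻¹ := by
    apply Matrix.inv_eq_right_inv
    rw [hD, Matrix.diagonal_mul_diagonal]
    have : (fun j => d j * (d j)⁻¹) = fun _ => (1 : ℝ) :=
      funext fun j => mul_inv_cancel₀ (hdne j)
    rw [this, Matrix.diagonal_one]
  have h1 : Dinvhalf * Dhalf = 1 := by
    rw [hDinvhalf, hDhalf, Matrix.diagonal_mul_diagonal]
    have : (fun j => (Real.sqrt (d j))⁻¹ * Real.sqrt (d j)) = fun _ => (1 : ℝ) :=
      funext fun j => inv_mul_cancel₀ (hsne j)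
    rw [this, Matrix.diagonal_one]
  have h2 : Dinvhalf * D * Dinvhalf = 1 := by
    rw [hDinvhalf, hD, Matrix.diagonal_mul_diagonal, Matrix.diagonal_mul_diagonal]
    have : (fun j => (Real.sqrt (d j))⁻¹ * d j * (Real.sqrt (d j))⁻¹)
        = fun _ => (1 : ℝ) := by
      funext j
      rw [← Real.mul_self_sqrt (hdpos j).le]
      field_simp
      rw [Real.sqrt_sq (Real.sqrt_nonneg _)]
      exact div_self (pow_ne_zero 2 (hsne j))
    rw [this, Matrix.diagonal_one]
  have h3 : Dhalf * D⁻¹ = Dinvhalf := by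
    rw [hDhalf, hDinv, hDinvhalf, Matrix.diagonal_mul_diagonal]
    have : (fun j => Real.sqrt (d j) * (d j)⁻¹) = fun j => (Real.sqrt (d j))⁻¹ := by
      funext j
      have hms := Real.mul_self_sqrt (hdpos j).le
      rw [show (d j)⁻¹ = (Real.sqrt (d j))⁻¹ * (Real.sqrt (d j))⁻¹ by
        rw [← mul_inv, hms]]
      rw [← mul_assoc, mul_inv_cancel₀ (hsne j), one_mul]
    rw [this]
  have key : Dhalf * (D⁻¹ * W) = (U * (1 - Λ) * Uᵀ) * Dhalf := by
    have hIL : U * (1 - Λ) * Uᵀ = 1 - L := by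
      rw [Matrix.mul_sub, Matrix.mul_one, Matrix.sub_mul, hUorth, hdec]
    rw [hIL, hL]
    have : (1 : Matrix (Fin n) (Fin n) ℝ) - Dinvhalf * (D - W) * Dinvhalf
        = Dinvhalf * W * Dinvhalf := by
      rw [Matrix.mul_sub, Matrix.sub_mul, h2, sub_sub_cancel]
    rw [this, ← Matrix.mul_assoc, h3, Matrix.mul_assoc (Dinvhalf * W), h1,
      Matrix.mul_one]
  calc Dhalf *ᵥ xout = (Dhalf * (D⁻¹ * W)) *ᵥ x := by
        rw [hxout, Matrix.mulVec_mulVec]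
    _ = ((U * (1 - Λ) * Uᵀ) * Dhalf) *ᵥ x := by rw [key]
    _ = (U * (1 - Λ) * Uᵀ) *ᵥ (Dhalf *ᵥ x) := by rw [Matrix.mulVec_mulVec]
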